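/- For every λ ∈ ℚ with λ ≠ 0 and all words u, v ∈ L*: (1) Δ̄_λ(y)·(Δ̄_λ(u) ⧢_λ Δ̄_λ(v)) = Δ̄_λ(yu) ⧢_λ Δ̄_λ(v) = Δ̄_λ(u) ⧢_λ Δ̄_λ(yv), and (2) Δ̄_λ(d)·(Δ̄_λ(u) ⧢_λ Δ̄_λ(v)) = Δ̄_λ(du) ⧢_λ Δ̄_λ(v) + Δ̄_λ(u) ⧢_λ Δ̄_λ(dv) + λ·(Δ̄_λ(du) ⧢_λ Δ̄_λ(dv)), where · denotes the componentwise concatenation product on ℚ⟨L⟩ ⊗ ℚ⟨L⟩. -/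

import Mathlib

open scoped TensorProduct

/-- The two-letter alphabet `L = {d, y}`. -/
inductive Letter : Type
  | d : Letter
  | y : Letter
deriving DecidableEq

/-- `ℚ⟨L⟩`, the ℚ-vector space with basis the words on `L` (with the concatenation
product, it is the free noncommutative ℚ-algebra on `L`). -/
abbrev V : Type := MonoidAlgebra ℚ (FreeMonoid Letter)

/-- The basis vector corresponding to a word. -/
noncomputable def wrd (w : List Letter) : V :=
  MonoidAlgebra.single (FreeMonoid.ofList w) (1 : ℚ)

/-- The shuffle-type product `⧢_λ` on basis words, defined recursively by
(P1) `e ⧢ w = w ⧢ e = w`; (P2) `(yu) ⧢ v = u ⧢ (yv) = y(u ⧢ v)`;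
(P3) `(du) ⧢ (dv) = (1/λ)(d(u ⧢ v) − (du) ⧢ v − u ⧢ (dv))`. -/
noncomputable def shW (lam : ℚ) : List Letter → List Letter → V
  | [], v => wrd v
  | u@(_ :: _), [] => wrd u
  | (Letter.y :: u), v => wrd [Letter.y] * shW lam u v
  | (Letter.d :: u), (Letter.y :: v) => wrd [Letter.y] * shW lam (Letter.d :: u) v
  | (Letter.d :: u), (Letter.d :: v) =>
      lam⁻¹ • (wrd [Letter.d] * shW lam u v
        - shW lam (Letter.d :: u) v - shW lam u (Letter.d :: v))
termination_by u v => u.length + v.length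

/-- The ℚ-bilinear extension of `⧢_λ` to `ℚ⟨L⟩`. -/
noncomputable def shL (lam : ℚ) : V →ₗ[ℚ] V →ₗ[ℚ] V :=
  (Finsupp.lsum ℚ fun u => LinearMap.toSpanSingleton ℚ (V →ₗ[ℚ] V)
    ((Finsupp.lsum ℚ fun v =>
      LinearMap.toSpanSingleton ℚ V (shW lam (FreeMonoid.toList u) (FreeMonoid.toList v)))
      ∘ₗ (MonoidAlgebra.coeffLinearEquiv ℚ).toLinearMap))
    ∘ₗ (MonoidAlgebra.coeffLinearEquiv ℚ).toLinearMap

/-- The values of `Δ̄_λ` on letters: `Δ̄_λ(y) = e⊗y + y⊗e`,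
`Δ̄_λ(d) = e⊗d + d⊗e + λ·(d⊗d)`. -/
noncomputable def dval (lam : ℚ) : Letter → (V ⊗[ℚ] V)
  | Letter.y => 1 ⊗ₜ wrd [Letter.y] + wrd [Letter.y] ⊗ₜ 1
  | Letter.d => 1 ⊗ₜ wrd [Letter.d] + wrd [Letter.d] ⊗ₜ 1
      + lam • (wrd [Letter.d] ⊗ₜ wrd [Letter.d])

/-- `Δ̄_λ : ℚ⟨L⟩ → ℚ⟨L⟩ ⊗ ℚ⟨L⟩`, the unique morphism of unital ℚ-algebras
(concatenation product on the source, componentwise concatenation on the tensor square)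
with the prescribed values on the letters. -/
noncomputable def Delta (lam : ℚ) : V →ₐ[ℚ] (V ⊗[ℚ] V) :=
  MonoidAlgebra.lift ℚ (V ⊗[ℚ] V) (FreeMonoid Letter) (FreeMonoid.lift (dval lam))

/-- The componentwise extension of `⧢_λ` to `ℚ⟨L⟩ ⊗ ℚ⟨L⟩`:
`(a⊗b) ⧢ (c⊗d) = (a ⧢ c) ⊗ (b ⧢ d)`. -/
noncomputable def shT (lam : ℚ) (x z : V ⊗[ℚ] V) : V ⊗[ℚ] V :=
  (TensorProduct.map (TensorProduct.lift (shL lam)) (TensorProduct.lift (shL lam)))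
    ((TensorProduct.tensorTensorTensorComm ℚ V V V V) (x ⊗ₜ z))

/-- `T₋ ⊆ ℚ⟨L⟩`: the span of the words ending in the letter `d`. -/
noncomputable def Tneg : Submodule ℚ V :=
  Submodule.span ℚ {x : V | ∃ w : List Letter, x = wrd (w ++ [Letter.d])}

lemma wrd_mul (u v : List Letter) : wrd u * wrd v = wrd (u ++ v) := by
  simp [wrd, MonoidAlgebra.single_mul_single]

lemma shL_wrd (lam : ℚ) (u v : List Letter) :
    shL lam (wrd u) (wrd v) = shW lam u v := by
  simp [shL, wrd, MonoidAlgebra.coeffLinearEquiv, MonoidAlgebra.coeff_single]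

lemma shW_nil_right (lam : ℚ) (u : List Letter) : shW lam u [] = wrd u := by
  cases u with
  | nil => simp [shW]
  | cons a u => cases a <;> simp [shW]

lemma shW_y_left (lam : ℚ) (u v : List Letter) :
    shW lam (Letter.y :: u) v = wrd [Letter.y] * shW lam u v := by
  cases v with
  | nil => rw [shW_nil_right, shW_nil_right, wrd_mul]; rfl
  | cons b v => rw [shW]; simp

lemma shW_y_right (lam : ℚ) (u v : List Letter) :
    shW lam u (Letter.y :: v) = wrd [Letter.y] * shW lam u v := by
  induction u with
  | nil => simp only [shW, wrd_mul]; rfl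
  | cons a u ih =>
    cases a with
    | y =>
      rw [shW_y_left, shW_y_left, ih]
    | d => rw [shW]

lemma shW_d (lam : ℚ) (hlam : lam ≠ 0) (u v : List Letter) :
    wrd [Letter.d] * shW lam u v =
      shW lam (Letter.d :: u) v + shW lam u (Letter.d :: v)
        + lam • shW lam (Letter.d :: u) (Letter.d :: v) := by
  have h : shW lam (Letter.d :: u) (Letter.d :: v) =
      lam⁻¹ • (wrd [Letter.d] * shW lam u v
        - shW lam (Letter.d :: u) v - shW lam u (Letter.d :: v)) := by rw [shW]
  rw [h, smul_smul, mul_inv_cancel₀ hlam, one_smul]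
  abel

lemma single_eq (a : FreeMonoid Letter) (b : ℚ) :
    (MonoidAlgebra.single a b : V) = b • wrd (FreeMonoid.toList a) := by
  simp [wrd, FreeMonoid.ofList_toList, MonoidAlgebra.smul_single]

lemma shL_y_left (lam : ℚ) (x z : V) :
    shL lam (wrd [Letter.y] * x) z = wrd [Letter.y] * shL lam x z := by
  induction x using MonoidAlgebra.induction_linear with
  | zero => simp
  | add f g hf hg => simp only [mul_add, map_add, LinearMap.add_apply, hf, hg]
  | single a b =>
    induction z using MonoidAlgebra.induction_linear with
    | zero => simp
    | add f g hf hg => simp only [map_add, mul_add, hf, hg]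
    | single c e =>
      rw [single_eq a b, single_eq c e]
      simp only [mul_smul_comm, map_smul, LinearMap.smul_apply]
      rw [shL_wrd, wrd_mul, shL_wrd]
      rw [show ([Letter.y] ++ FreeMonoid.toList a) = Letter.y :: FreeMonoid.toList a from rfl,
        shW_y_left]

lemma shL_y_right (lam : ℚ) (x z : V) :
    shL lam x (wrd [Letter.y] * z) = wrd [Letter.y] * shL lam x z := by
  induction x using MonoidAlgebra.induction_linear with
  | zero => simp
  | add f g hf hg => simp only [mul_add, map_add, LinearMap.add_apply, hf, hg]
  | single a b =>
    induction z using MonoidAlgebra.induction_linear with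
    | zero => simp
    | add f g hf hg => simp only [map_add, mul_add, hf, hg]
    | single c e =>
      rw [single_eq a b, single_eq c e]
      simp only [mul_smul_comm, map_smul, LinearMap.smul_apply]
      rw [shL_wrd, wrd_mul, shL_wrd]
      rw [show ([Letter.y] ++ FreeMonoid.toList c) = Letter.y :: FreeMonoid.toList c from rfl,
        shW_y_right]

lemma shL_d (lam : ℚ) (hlam : lam ≠ 0) (x z : V) :
    wrd [Letter.d] * shL lam x z =
      shL lam (wrd [Letter.d] * x) z + shL lam x (wrd [Letter.d] * z)
        + lam • shL lam (wrd [Letter.d] * x) (wrd [Letter.d] * z) := by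
  induction x using MonoidAlgebra.induction_linear with
  | zero => simp
  | add f g hf hg =>
    simp only [mul_add, map_add, LinearMap.add_apply, hf, hg, smul_add]
    abel
  | single a b =>
    induction z using MonoidAlgebra.induction_linear with
    | zero => simp
    | add f g hf hg =>
      simp only [map_add, mul_add, hf, hg, smul_add]
      abel
    | single c e =>
      rw [single_eq a b, single_eq c e]
      simp only [mul_smul_comm, map_smul, LinearMap.smul_apply, smul_smul]
      rw [shL_wrd, wrd_mul, wrd_mul, shL_wrd, shL_wrd, shL_wrd]
      rw [show ([Letter.d] ++ FreeMonoid.toList a) = Letter.d :: FreeMonoid.toList a from rfl,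
        show ([Letter.d] ++ FreeMonoid.toList c) = Letter.d :: FreeMonoid.toList c from rfl,
        shW_d lam hlam]
      simp only [smul_add, smul_smul]
      ring_nf

lemma shT_tmul (lam : ℚ) (a b c e : V) :
    shT lam (a ⊗ₜ b) (c ⊗ₜ e) = (shL lam a c) ⊗ₜ (shL lam b e) := by
  simp [shT]

lemma shT_add_left (lam : ℚ) (x x' z : V ⊗[ℚ] V) :
    shT lam (x + x') z = shT lam x z + shT lam x' z := by
  simp only [shT, TensorProduct.add_tmul, LinearEquiv.map_add, LinearMap.map_add]

lemma shT_add_right (lam : ℚ) (x z z' : V ⊗[ℚ] V) :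
    shT lam x (z + z') = shT lam x z + shT lam x z' := by
  simp only [shT, TensorProduct.tmul_add, LinearEquiv.map_add, LinearMap.map_add]

lemma shT_zero_left (lam : ℚ) (z : V ⊗[ℚ] V) : shT lam 0 z = 0 := by
  simp only [shT, TensorProduct.zero_tmul, LinearEquiv.map_zero, LinearMap.map_zero]

lemma shT_zero_right (lam : ℚ) (x : V ⊗[ℚ] V) : shT lam x 0 = 0 := by
  simp only [shT, TensorProduct.tmul_zero, LinearEquiv.map_zero, LinearMap.map_zero]

lemma shT_smul_left (lam r : ℚ) (x z : V ⊗[ℚ] V) :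
    shT lam (r • x) z = r • shT lam x z := by
  simp only [shT, ← TensorProduct.smul_tmul', LinearEquiv.map_smul, LinearMap.map_smul]

lemma shT_smul_right (lam r : ℚ) (x z : V ⊗[ℚ] V) :
    shT lam x (r • z) = r • shT lam x z := by
  simp only [shT, TensorProduct.tmul_smul, LinearEquiv.map_smul, LinearMap.map_smul]

lemma shT_y_left (lam : ℚ) (X Z : V ⊗[ℚ] V) :
    shT lam (dval lam Letter.y * X) Z = dval lam Letter.y * shT lam X Z := by
  induction X using TensorProduct.induction_on with
  | zero => simp [shT_zero_left]
  | add x x' hx hx' => simp only [mul_add, shT_add_left, hx, hx']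
  | tmul a b =>
    induction Z using TensorProduct.induction_on with
    | zero => simp [shT_zero_right]
    | add z z' hz hz' => simp only [mul_add, shT_add_right, hz, hz']
    | tmul c e =>
      simp only [dval, add_mul, mul_add, Algebra.TensorProduct.tmul_mul_tmul, one_mul, mul_one,
        shT_add_left, shT_add_right, shT_tmul, shL_y_left, shL_y_right,
        TensorProduct.tmul_add, TensorProduct.add_tmul]

lemma shT_y_right (lam : ℚ) (X Z : V ⊗[ℚ] V) :
    shT lam X (dval lam Letter.y * Z) = dval lam Letter.y * shT lam X Z := by
  induction X using TensorProduct.induction_on with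
  | zero => simp [shT_zero_left]
  | add x x' hx hx' => simp only [mul_add, shT_add_left, hx, hx']
  | tmul a b =>
    induction Z using TensorProduct.induction_on with
    | zero => simp [shT_zero_right, mul_zero]
    | add z z' hz hz' => simp only [mul_add, shT_add_right, hz, hz']
    | tmul c e =>
      simp only [dval, add_mul, mul_add, Algebra.TensorProduct.tmul_mul_tmul, one_mul, mul_one,
        shT_add_left, shT_add_right, shT_tmul, shL_y_left, shL_y_right,
        TensorProduct.tmul_add, TensorProduct.add_tmul]

lemma shT_d (lam : ℚ) (hlam : lam ≠ 0) (X Z : V ⊗[ℚ] V) :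
    dval lam Letter.d * shT lam X Z =
      shT lam (dval lam Letter.d * X) Z + shT lam X (dval lam Letter.d * Z)
        + lam • shT lam (dval lam Letter.d * X) (dval lam Letter.d * Z) := by
  induction X using TensorProduct.induction_on with
  | zero => simp [shT_zero_left]
  | add x x' hx hx' =>
    simp only [mul_add, shT_add_left, shT_add_right, hx, hx', smul_add]
    abel
  | tmul a b =>
    induction Z using TensorProduct.induction_on with
    | zero => simp [shT_zero_right, mul_zero]
    | add z z' hz hz' =>
      simp only [mul_add, shT_add_left, shT_add_right, hz, hz', smul_add]
      abel
    | tmul c e =>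
      simp only [dval, add_mul, mul_add, Algebra.TensorProduct.tmul_mul_tmul, one_mul, mul_one,
        smul_mul_assoc, mul_smul_comm, shT_add_left, shT_add_right, shT_smul_left,
        shT_smul_right, shT_tmul, shL_d lam hlam,
        TensorProduct.tmul_add, TensorProduct.add_tmul, TensorProduct.tmul_smul,
        TensorProduct.smul_tmul', map_add, map_smul, LinearMap.add_apply, LinearMap.smul_apply,
        smul_add, smul_smul]
      module

lemma Delta_letter (lam : ℚ) (l : Letter) : Delta lam (wrd [l]) = dval lam l := by
  simp [Delta, wrd, MonoidAlgebra.lift_single]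

lemma Delta_cons (lam : ℚ) (l : Letter) (u : List Letter) :
    Delta lam (wrd (l :: u)) = dval lam l * Delta lam (wrd u) := by
  rw [show wrd (l :: u) = wrd [l] * wrd u from (wrd_mul [l] u).symm, map_mul, Delta_letter]

/-- Compatibility of `Δ̄_λ` with `⧢_λ` on words (`λ ≠ 0`):
`Δ̄_λ(y)·(Δ̄_λ(u) ⧢ Δ̄_λ(v)) = Δ̄_λ(yu) ⧢ Δ̄_λ(v) = Δ̄_λ(u) ⧢ Δ̄_λ(yv)` and
`Δ̄_λ(d)·(Δ̄_λ(u) ⧢ Δ̄_λ(v)) = Δ̄_λ(du) ⧢ Δ̄_λ(v) + Δ̄_λ(u) ⧢ Δ̄_λ(dv)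
  + λ·(Δ̄_λ(du) ⧢ Δ̄_λ(dv))`. -/
theorem stmt_11 (lam : ℚ) (hlam : lam ≠ 0) (u v : List Letter) :
    (Delta lam (wrd [Letter.y]) * shT lam (Delta lam (wrd u)) (Delta lam (wrd v)) =
        shT lam (Delta lam (wrd (Letter.y :: u))) (Delta lam (wrd v)) ∧
      Delta lam (wrd [Letter.y]) * shT lam (Delta lam (wrd u)) (Delta lam (wrd v)) =
        shT lam (Delta lam (wrd u)) (Delta lam (wrd (Letter.y :: v)))) ∧
    Delta lam (wrd [Letter.d]) * shT lam (Delta lam (wrd u)) (Delta lam (wrd v)) =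
      shT lam (Delta lam (wrd (Letter.d :: u))) (Delta lam (wrd v)) +
        shT lam (Delta lam (wrd u)) (Delta lam (wrd (Letter.d :: v))) +
        lam • shT lam (Delta lam (wrd (Letter.d :: u))) (Delta lam (wrd (Letter.d :: v))) := by
  refine ⟨⟨?_, ?_⟩, ?_⟩
  · rw [Delta_letter, Delta_cons]
    exact (shT_y_left lam _ _).symm
  · rw [Delta_letter, Delta_cons]
    exact (shT_y_right lam _ _).symm
  · rw [Delta_letter, Delta_cons, Delta_cons]
    exact shT_d lam hlam _ _
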